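/- Let N ≥ 1 be an integer and let ρ_N be the unscaled GUE eigenvalue density. Then ρ_N satisfies, for every real x, the third order linear ordinary differential equation ρ_N'''(x) + (4N − x²)·ρ_N'(x) + x·ρ_N(x) = 0. -/

import Mathlib

open Nat MeasureTheory

/-- The orthonormal Hermite functions' polynomial part:
`p_n(x) = He_n(x)/√(√(2π)·n!)`, orthonormal for the weight `e^{-x²/2}` on `ℝ`. -/
noncomputable def pOrtho (n : ℕ) (x : ℝ) : ℝ :=
  Polynomial.aeval x (Polynomial.hermite n) /
    Real.sqrt (Real.sqrt (2 * Real.pi) * (n ! : ℝ))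

/-- The (unscaled) GUE eigenvalue density
`ρ_N(x) = √N · e^{-x²/2} · (p_N'(x)p_{N-1}(x) − p_N(x)p_{N-1}'(x))`. -/
noncomputable def gueDensity (N : ℕ) (x : ℝ) : ℝ :=
  Real.sqrt N * Real.exp (-x ^ 2 / 2) *
    (deriv (pOrtho N) x * pOrtho (N - 1) x - pOrtho N x * deriv (pOrtho (N - 1)) x)

lemma derivative_hermite (n : ℕ) :
    Polynomial.derivative (Polynomial.hermite (n + 1)) =
      ((n : Polynomial ℤ) + 1) * Polynomial.hermite n := by
  induction n with
  | zero => simp [Polynomial.hermite_succ]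
  | succ k ih =>
    have hd : Polynomial.derivative (Polynomial.hermite k) =
        Polynomial.X * Polynomial.hermite k - Polynomial.hermite (k + 1) := by
      rw [Polynomial.hermite_succ k]; ring
    rw [Polynomial.hermite_succ (k + 1), Polynomial.derivative_sub, Polynomial.derivative_mul,
      Polynomial.derivative_X, one_mul, ih, Polynomial.derivative_mul, hd]
    have h0 : Polynomial.derivative ((k : Polynomial ℤ) + 1) = 0 := by simp
    rw [h0]
    push_cast
    ring

theorem gueDensity_ode (N : ℕ) (hN : 1 ≤ N) (x : ℝ) :
    iteratedDeriv 3 (gueDensity N) x + (4 * (N : ℝ) - x ^ 2) * deriv (gueDensity N) x +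
      x * gueDensity N x = 0 := by
  obtain ⟨M, rfl⟩ : ∃ M, N = M + 1 := ⟨N - 1, (Nat.succ_pred_eq_of_pos hN).symm⟩
  clear hN
  set A : ℝ → ℝ := pOrtho (M + 1) with hAdef
  set B : ℝ → ℝ := pOrtho M with hBdef
  set c : ℝ := Real.sqrt (M + 1) with hcdef
  set E : ℝ → ℝ := fun y => Real.exp (-y ^ 2 / 2) with hEdef
  have hc : c * c = (M : ℝ) + 1 := by
    rw [hcdef]
    exact Real.mul_self_sqrt (by positivity)
  have hcpos : 0 < c := Real.sqrt_pos.mpr (by positivity)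
  have hkpos : ∀ n : ℕ, 0 < Real.sqrt (Real.sqrt (2 * Real.pi) * (n ! : ℝ)) := by
    intro n
    apply Real.sqrt_pos.mpr
    have : 0 < Real.sqrt (2 * Real.pi) := Real.sqrt_pos.mpr (by positivity)
    positivity
  have hk : Real.sqrt (Real.sqrt (2 * Real.pi) * ((M + 1)! : ℝ)) =
      Real.sqrt (Real.sqrt (2 * Real.pi) * (M ! : ℝ)) * c := by
    rw [hcdef, ← Real.sqrt_mul (by positivity)]
    congr 1
    rw [Nat.factorial_succ]
    push_cast
    ring
  -- derivative of A
  have hA : ∀ y : ℝ, HasDerivAt A (c * B y) y := by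
    intro y
    have h1 := Polynomial.hasDerivAt_aeval (𝕜 := ℝ) (q := Polynomial.hermite (M + 1)) y
    have h2 : (Polynomial.aeval y) (Polynomial.derivative (Polynomial.hermite (M + 1))) =
        ((M : ℝ) + 1) * Polynomial.aeval y (Polynomial.hermite M) := by
      rw [derivative_hermite]
      simp [mul_comm]
    rw [h2] at h1
    have h3 := h1.div_const (Real.sqrt (Real.sqrt (2 * Real.pi) * ((M + 1)! : ℝ)))
    have h4 : (((M : ℝ) + 1) * Polynomial.aeval y (Polynomial.hermite M)) /
        Real.sqrt (Real.sqrt (2 * Real.pi) * ((M + 1)! : ℝ)) = c * B y := by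
      rw [hk, hBdef]
      unfold pOrtho
      rw [← hc]
      field_simp
    rw [h4] at h3
    exact h3
  -- derivative of B
  have hB : ∀ y : ℝ, HasDerivAt B (y * B y - c * A y) y := by
    intro y
    have h1 := Polynomial.hasDerivAt_aeval (𝕜 := ℝ) (q := Polynomial.hermite M) y
    have h2 : (Polynomial.aeval y) (Polynomial.derivative (Polynomial.hermite M)) =
        y * Polynomial.aeval y (Polynomial.hermite M) -
          Polynomial.aeval y (Polynomial.hermite (M + 1)) := by
      have := Polynomial.hermite_succ M
      have h5 : Polynomial.derivative (Polynomial.hermite M) =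
          Polynomial.X * Polynomial.hermite M - Polynomial.hermite (M + 1) := by
        rw [this]; ring
      rw [h5]
      simp
    rw [h2] at h1
    have h3 := h1.div_const (Real.sqrt (Real.sqrt (2 * Real.pi) * (M ! : ℝ)))
    have h4 : (y * Polynomial.aeval y (Polynomial.hermite M) -
        Polynomial.aeval y (Polynomial.hermite (M + 1))) /
        Real.sqrt (Real.sqrt (2 * Real.pi) * (M ! : ℝ)) = y * B y - c * A y := by
      rw [hBdef, hAdef]
      unfold pOrtho
      rw [hk]
      have hkM := (hkpos M).ne'
      field_simp
    rw [h4] at h3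
    exact h3
  -- derivative of E
  have hE : ∀ y : ℝ, HasDerivAt E (-y * E y) y := by
    intro y
    have h1 : HasDerivAt (fun z : ℝ => -z ^ 2 / 2) (-y) y := by
      have : HasDerivAt (fun z : ℝ => -z ^ 2 / 2) (-(((2 : ℕ) : ℝ) * y ^ (2 - 1)) / 2) y :=
        ((hasDerivAt_pow 2 y).neg).div_const 2
      convert this using 1
      push_cast
      ring
    have := h1.exp
    convert this using 1
    ring
  -- rewrite gueDensity as F0
  have hgd : gueDensity (M + 1) = fun y =>
      E y * (((M : ℝ) + 1) * (A y ^ 2 + B y ^ 2) - c * y * (A y * B y)) := by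
    funext y
    unfold gueDensity
    have e1 : deriv (pOrtho (M + 1)) y = c * B y := (hA y).deriv
    have e2 : deriv (pOrtho (M + 1 - 1)) y = y * B y - c * A y := by
      simp only [Nat.add_sub_cancel]
      exact (hB y).deriv
    have e3 : (M + 1 : ℕ) - 1 = M := rfl
    rw [e1, e2, e3]
    have : Real.sqrt ((M + 1 : ℕ) : ℝ) = c := by rw [hcdef]; push_cast; ring_nf
    rw [this]
    show c * E y * (c * B y * B y - A y * (y * B y - c * A y)) = _
    linear_combination (E y * (A y ^ 2 + B y ^ 2)) * hc
  -- the chain of derivatives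
  set F0 : ℝ → ℝ := fun y =>
    E y * (((M : ℝ) + 1) * (A y ^ 2 + B y ^ 2) - c * y * (A y * B y)) with hF0def
  set F1 : ℝ → ℝ := fun y => -c * (E y * (A y * B y)) with hF1def
  set F2 : ℝ → ℝ := fun y => ((M : ℝ) + 1) * (E y * (A y ^ 2 - B y ^ 2)) with hF2def
  set F3 : ℝ → ℝ := fun y =>
    ((M : ℝ) + 1) * (E y * (4 * c * (A y * B y) - y * (A y ^ 2 + B y ^ 2))) with hF3def
  have hAB : ∀ y : ℝ, HasDerivAt (fun z => A z * B z)
      (c * B y * B y + A y * (y * B y - c * A y)) y := fun y => (hA y).mul (hB y)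
  have hD0 : ∀ y : ℝ, HasDerivAt F0 (F1 y) y := by
    intro y
    have hsq : HasDerivAt (fun z => A z ^ 2 + B z ^ 2)
        (2 * A y ^ 1 * (c * B y) + 2 * B y ^ 1 * (y * B y - c * A y)) y :=
      ((hA y).pow 2).add ((hB y).pow 2)
    have hP : HasDerivAt (fun z => ((M : ℝ) + 1) * (A z ^ 2 + B z ^ 2) - c * z * (A z * B z))
        (((M : ℝ) + 1) * (2 * A y ^ 1 * (c * B y) + 2 * B y ^ 1 * (y * B y - c * A y)) -
          (c * (A y * B y) + c * y * (c * B y * B y + A y * (y * B y - c * A y)))) y := by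
      refine (hsq.const_mul _).sub ?_
      have hcy : HasDerivAt (fun z : ℝ => c * z) c y := by
        simpa using (hasDerivAt_id y).const_mul c
      exact hcy.mul (hAB y)
    have := (hE y).mul hP
    refine this.congr_deriv (Eq.symm ?_)
    show F1 y = _
    rw [hF1def]
    linear_combination (-(E y * y * (A y ^ 2 - B y ^ 2))) * hc
  have hD1 : ∀ y : ℝ, HasDerivAt F1 (F2 y) y := by
    intro y
    have := ((hE y).mul (hAB y)).const_mul (-c)
    refine this.congr_deriv (Eq.symm ?_)
    show F2 y = _
    rw [hF2def]
    linear_combination (-(E y * (A y ^ 2 - B y ^ 2))) * hc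
  have hD2 : ∀ y : ℝ, HasDerivAt F2 (F3 y) y := by
    intro y
    have hsq : HasDerivAt (fun z => A z ^ 2 - B z ^ 2)
        (2 * A y ^ 1 * (c * B y) - 2 * B y ^ 1 * (y * B y - c * A y)) y :=
      ((hA y).pow 2).sub ((hB y).pow 2)
    have := ((hE y).mul hsq).const_mul ((M : ℝ) + 1)
    refine this.congr_deriv (Eq.symm ?_)
    show F3 y = _
    rw [hF3def]
    ring
  rw [hgd]
  have d1 : deriv F0 = F1 := funext fun y => (hD0 y).deriv
  have d2 : deriv F1 = F2 := funext fun y => (hD1 y).deriv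
  have d3 : deriv F2 = F3 := funext fun y => (hD2 y).deriv
  have hiter : iteratedDeriv 3 F0 x = F3 x := by
    rw [show (3 : ℕ) = 2 + 1 from rfl, iteratedDeriv_succ,
      show (2 : ℕ) = 1 + 1 from rfl, iteratedDeriv_succ, iteratedDeriv_one,
      d1, d2, d3]
  show iteratedDeriv 3 F0 x + _ * deriv F0 x + _ = 0
  rw [hiter, d1]
  rw [hF3def, hF1def, hF0def]
  push_cast
  ring
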